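/- The infinite word u = lim u_i does not admit uniform frequencies of letters: there is no real f such that for every sequence (w_n) of factors of u with |w_n| → ∞, |w_n|_0/|w_n| → f. -/

import Mathlib

/-- The `k`-th power of a finite word `w` (concatenation of `k` copies). -/
def wpow (w : List Bool) (k : ℕ) : List Bool := (List.replicate k w).flatten

/-- The pair of words `(u_i, v_i)`:  `u_0 = 0`, `v_0 = 1`,
`u_{i+1} = u_i^{m_i} v_i^{l_i}`, `v_{i+1} = u_i^{m_i} v_i^{n_i}`. -/
def uvSeq (l m n : ℕ → ℕ) : ℕ → List Bool × List Bool
  | 0 => ([false], [true])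
  | i + 1 =>
      (wpow (uvSeq l m n i).1 (m i) ++ wpow (uvSeq l m n i).2 (l i),
       wpow (uvSeq l m n i).1 (m i) ++ wpow (uvSeq l m n i).2 (n i))

/-- The substitution `σ_h` : `0 ↦ 0^{m_h} 1^{l_h}`, `1 ↦ 0^{m_h} 1^{n_h}`. -/
def subw (l m n : ℕ → ℕ) (h : ℕ) (w : List Bool) : List Bool :=
  w.flatMap fun c => List.replicate (m h) false ++ List.replicate (if c then n h else l h) true

/-- `wordIter i h = σ_h σ_{h+1} ⋯ σ_{h+i-1}(0)`. -/
def wordIter (l m n : ℕ → ℕ) : ℕ → ℕ → List Bool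
  | 0, _ => [false]
  | i + 1, h => subw l m n h (wordIter l m n i (h + 1))

/-- The infinite word `u^{(h)} = lim_i σ_h ⋯ σ_{h+i-1}(0)`. -/
def limWord (l m n : ℕ → ℕ) (h : ℕ) (k : ℕ) : Bool :=
  (wordIter l m n (k + 1) h).getD k false

/-- `w` is a factor of the infinite word `U`. -/
def IsFactor (U : ℕ → Bool) (w : List Bool) : Prop :=
  ∃ k, w = (List.range w.length).map fun j => U (k + j)

/-- `σ_0 σ_1 ⋯ σ_{h+i-1}` starting at `h`, applied to `w`. -/
def subComp (l m n : ℕ → ℕ) : ℕ → ℕ → List Bool → List Bool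
  | 0, _, w => w
  | i + 1, h, w => subw l m n h (subComp l m n i (h + 1) w)

/-- `\hat{σ}_h(w) = 1^{l_h} σ_h(w) 0^{m_h} 1^{l_h}`. -/
def hatw (l m n : ℕ → ℕ) (h : ℕ) (w : List Bool) : List Bool :=
  List.replicate (l h) true ++ subw l m n h w ++
    List.replicate (m h) false ++ List.replicate (l h) true

/-- `hatComp i h w = \hat{σ}_h ⋯ \hat{σ}_{h+i-1}(w)`. -/
def hatComp (l m n : ℕ → ℕ) : ℕ → ℕ → List Bool → List Bool
  | 0, _, w => w
  | i + 1, h, w => hatw l m n h (hatComp l m n i (h + 1) w)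

/-- The complexity function of the infinite word `U`. -/
noncomputable def complexityFn (U : ℕ → Bool) (nn : ℕ) : ℕ :=
  Set.ncard {w : List Bool | w.length = nn ∧ IsFactor U w}

namespace Aux

variable (l m n : ℕ → ℕ)

theorem wpow_succ (w : List Bool) (k : ℕ) : wpow w (k+1) = w ++ wpow w k := by
  simp [wpow, List.replicate_succ]

theorem length_wpow (w : List Bool) (k : ℕ) : (wpow w k).length = k * w.length := by
  induction k with
  | zero => simp [wpow]
  | succ k ih => rw [wpow_succ]; simp [ih]; ring

theorem count_wpow (w : List Bool) (k : ℕ) (c : Bool) :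
    (wpow w k).count c = k * w.count c := by
  induction k with
  | zero => simp [wpow]
  | succ k ih => rw [wpow_succ]; simp [List.count_append, ih]; ring

theorem subw_append (h : ℕ) (w v : List Bool) :
    subw l m n h (w ++ v) = subw l m n h w ++ subw l m n h v := by
  simp [subw]

theorem subComp_append (i h : ℕ) (w v : List Bool) :
    subComp l m n i h (w ++ v) = subComp l m n i h w ++ subComp l m n i h v := by
  induction i generalizing h with
  | zero => rfl
  | succ i ih => simp [subComp, ih, subw_append]

theorem subComp_wpow (i h : ℕ) (w : List Bool) (k : ℕ) :
    subComp l m n i h (wpow w k) = wpow (subComp l m n i h w) k := by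
  induction k with
  | zero =>
      have : subComp l m n i h [] = [] := by
        induction i generalizing h with
        | zero => rfl
        | succ i ih => simp [subComp, ih, subw]
      simpa [wpow] using this
  | succ k ih => rw [wpow_succ, wpow_succ, subComp_append, ih]

theorem subComp_succ_right (i h : ℕ) (w : List Bool) :
    subComp l m n (i+1) h w = subComp l m n i h (subw l m n (h+i) w) := by
  induction i generalizing h with
  | zero => simp [subComp]
  | succ i ih =>
      show subw l m n h (subComp l m n (i+1) (h+1) w) = _
      rw [ih (h+1)]
      have e : h + 1 + i = h + (i+1) := by omega
      rw [e]
      rfl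

theorem wordIter_eq_subComp (i j h : ℕ) :
    wordIter l m n (i + j) h = subComp l m n i h (wordIter l m n j (h + i)) := by
  induction i generalizing h j with
  | zero => simp [subComp]
  | succ i ih =>
      have e1 : i + 1 + j = i + (j + 1) := by omega
      rw [e1, ih]
      have e2 : wordIter l m n (j+1) (h+i) = subw l m n (h+i) (wordIter l m n j (h+i+1)) := rfl
      rw [e2, ← subComp_succ_right]
      have e3 : h + i + 1 = h + (i+1) := by omega
      rw [e3]


theorem subw_prefix (h : ℕ) {w v : List Bool} (hp : w <+: v) :
    subw l m n h w <+: subw l m n h v := by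
  obtain ⟨t, rfl⟩ := hp
  rw [subw_append]
  exact ⟨_, rfl⟩

theorem wordIter_prefix (hm1 : ∀ h, 1 ≤ m h) (i h : ℕ) :
    wordIter l m n i h <+: wordIter l m n (i+1) h := by
  induction i generalizing h with
  | zero =>
      show [false] <+: subw l m n h [false]
      have : subw l m n h [false]
          = List.replicate (m h) false ++ List.replicate (l h) true := by
        simp [subw]
      rw [this]
      obtain ⟨k, hk⟩ : ∃ k, m h = k + 1 := ⟨m h - 1, by have := hm1 h; omega⟩
      rw [hk, List.replicate_succ]
      exact ⟨List.replicate k false ++ List.replicate (l h) true, by simp⟩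
  | succ i ih =>
      exact subw_prefix l m n h (ih (h+1))

theorem wordIter_prefix_le (hm1 : ∀ h, 1 ≤ m h) {i j : ℕ} (hij : i ≤ j) (h : ℕ) :
    wordIter l m n i h <+: wordIter l m n j h := by
  induction j with
  | zero => simp_all
  | succ j ih =>
      rcases Nat.eq_or_lt_of_le hij with rfl | hlt
      · exact List.prefix_refl _
      · exact (ih (by omega)).trans (wordIter_prefix l m n hm1 j h)

theorem length_subw_ge (hl1 : ∀ h, 1 ≤ l h) (hm1 : ∀ h, 1 ≤ m h) (hn1 : ∀ h, 1 ≤ n h)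
    (h : ℕ) (w : List Bool) :
    2 * w.length ≤ (subw l m n h w).length := by
  induction w with
  | nil => simp [subw]
  | cons c w ih =>
      have : subw l m n h (c :: w)
          = (List.replicate (m h) false ++ List.replicate (if c then n h else l h) true)
            ++ subw l m n h w := by simp [subw]
      rw [this]
      simp only [List.length_append, List.length_cons, List.length_replicate]
      have := hl1 h; have := hm1 h; have := hn1 h
      have hif : 1 ≤ (if c = true then n h else l h) := by
        cases c <;> simp [hl1 h, hn1 h]
      omega

theorem lt_length_wordIter (hl1 : ∀ h, 1 ≤ l h) (hm1 : ∀ h, 1 ≤ m h) (hn1 : ∀ h, 1 ≤ n h)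
    (i h : ℕ) : i < (wordIter l m n i h).length := by
  induction i generalizing h with
  | zero => simp [wordIter]
  | succ i ih =>
      have h1 := length_subw_ge l m n hl1 hm1 hn1 h (wordIter l m n i (h+1))
      have h2 := ih (h+1)
      show i + 1 < (subw l m n h (wordIter l m n i (h+1))).length
      omega

theorem wordIter_eq_map (hl1 : ∀ h, 1 ≤ l h) (hm1 : ∀ h, 1 ≤ m h) (hn1 : ∀ h, 1 ≤ n h)
    (i : ℕ) :
    wordIter l m n i 0
      = (List.range (wordIter l m n i 0).length).map (fun j => limWord l m n 0 j) := by
  apply List.ext_getElem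
  · simp
  · intro j hj hj'
    have hjlen : j < (wordIter l m n i 0).length := hj
    have hbig1 : wordIter l m n i 0 <+: wordIter l m n (max i (j+1)) 0 :=
      wordIter_prefix_le l m n hm1 (le_max_left _ _) 0
    have hbig2 : wordIter l m n (j+1) 0 <+: wordIter l m n (max i (j+1)) 0 :=
      wordIter_prefix_le l m n hm1 (le_max_right _ _) 0
    have hj2 : j < (wordIter l m n (j+1) 0).length :=
      Nat.lt_of_succ_lt (lt_length_wordIter l m n hl1 hm1 hn1 (j+1) 0)
    have e1 : (wordIter l m n i 0)[j] = (wordIter l m n (max i (j+1)) 0)[j]'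
        (lt_of_lt_of_le hjlen hbig1.length_le) := by
      exact List.IsPrefix.getElem hbig1 hjlen
    have e2 : (wordIter l m n (j+1) 0)[j] = (wordIter l m n (max i (j+1)) 0)[j]'
        (lt_of_lt_of_le hjlen hbig1.length_le) := by
      exact List.IsPrefix.getElem hbig2 hj2
    rw [List.getElem_map, List.getElem_range]
    show _ = limWord l m n 0 j
    unfold limWord
    rw [List.getD_eq_getElem _ _ hj2]
    rw [e1, e2]


theorem replicate_eq_wpow (k : ℕ) (c : Bool) : List.replicate k c = wpow [c] k := by
  induction k with
  | zero => simp [wpow]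
  | succ k ih => rw [List.replicate_succ, wpow_succ, ← ih]; rfl

def Uw (i : ℕ) : List Bool := subComp l m n i 0 [false]
def Vw (i : ℕ) : List Bool := subComp l m n i 0 [true]

theorem subw_false (h : ℕ) :
    subw l m n h [false] = wpow [false] (m h) ++ wpow [true] (l h) := by
  rw [← replicate_eq_wpow, ← replicate_eq_wpow]; simp [subw]

theorem subw_true (h : ℕ) :
    subw l m n h [true] = wpow [false] (m h) ++ wpow [true] (n h) := by
  rw [← replicate_eq_wpow, ← replicate_eq_wpow]; simp [subw]

theorem Uw_succ (i : ℕ) :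
    Uw l m n (i+1) = wpow (Uw l m n i) (m i) ++ wpow (Vw l m n i) (l i) := by
  show subComp l m n (i+1) 0 [false] = _
  rw [subComp_succ_right]
  have : (0 : ℕ) + i = i := by omega
  rw [this, subw_false, subComp_append, subComp_wpow, subComp_wpow]
  rfl

theorem Vw_succ (i : ℕ) :
    Vw l m n (i+1) = wpow (Uw l m n i) (m i) ++ wpow (Vw l m n i) (n i) := by
  show subComp l m n (i+1) 0 [true] = _
  rw [subComp_succ_right]
  have : (0 : ℕ) + i = i := by omega
  rw [this, subw_true, subComp_append, subComp_wpow, subComp_wpow]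
  rfl

theorem wordIter_decomp (i : ℕ) :
    wordIter l m n (i+1) 0 = wpow (Uw l m n i) (m i) ++ wpow (Vw l m n i) (l i) := by
  have h1 := wordIter_eq_subComp l m n i 1 0
  have e : i + 1 = 1 + i := by omega
  have e2 : (0:ℕ) + i = i := by omega
  have h2 : wordIter l m n (i+1) 0 = subComp l m n i 0 (wordIter l m n 1 (0+i)) :=
    wordIter_eq_subComp l m n i 1 0
  rw [e2] at h2
  rw [h2]
  have : wordIter l m n 1 i = subw l m n i [false] := rfl
  rw [this, subw_false, subComp_append, subComp_wpow, subComp_wpow]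
  rfl

theorem isFactor_of_mid (hl1 : ∀ h, 1 ≤ l h) (hm1 : ∀ h, 1 ≤ m h) (hn1 : ∀ h, 1 ≤ n h)
    (i : ℕ) (s w t : List Bool) (hdec : wordIter l m n i 0 = s ++ w ++ t) :
    IsFactor (limWord l m n 0) w := by
  refine ⟨s.length, ?_⟩
  have hW := wordIter_eq_map l m n hl1 hm1 hn1 i
  set f := fun j => limWord l m n 0 j with hf
  rw [hdec] at hW
  have hlen : (s ++ w ++ t).length = s.length + (w.length + t.length) := by
    simp [List.length_append, Nat.add_assoc]
  rw [hlen] at hW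
  rw [List.range_add, List.map_append] at hW
  rw [List.append_assoc] at hW
  have h1 : w ++ t = List.map f (List.map (fun x => s.length + x) (List.range (w.length + t.length))) :=
    List.append_inj_right hW (by simp)
  rw [List.range_add, List.map_append, List.map_append] at h1
  have h2 : w = List.map f (List.map (fun x => s.length + x) (List.range w.length)) := by
    exact List.append_inj_left h1 (by simp)
  rw [h2]
  simp [List.map_map]
  intro _ _; rfl

theorem count_Uw_succ (i : ℕ) :
    (Uw l m n (i+1)).count false
      = m i * (Uw l m n i).count false + l i * (Vw l m n i).count false := by
  rw [Uw_succ]; simp [List.count_append, count_wpow]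

theorem length_Uw_succ (i : ℕ) :
    (Uw l m n (i+1)).length
      = m i * (Uw l m n i).length + l i * (Vw l m n i).length := by
  rw [Uw_succ]; simp [List.length_append, length_wpow]

theorem count_Vw_succ (i : ℕ) :
    (Vw l m n (i+1)).count false
      = m i * (Uw l m n i).count false + n i * (Vw l m n i).count false := by
  rw [Vw_succ]; simp [List.count_append, count_wpow]

theorem length_Vw_succ (i : ℕ) :
    (Vw l m n (i+1)).length
      = m i * (Uw l m n i).length + n i * (Vw l m n i).length := by
  rw [Vw_succ]; simp [List.length_append, length_wpow]

theorem keyStep (Y A B C : ℤ) (hY : 2 ≤ Y) (hA : 0 ≤ A) (hB : 1 ≤ B) (hC : 0 ≤ C)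
    (H : (36*Y^4+32)*(Y^2*(B*B)) + 64*Y^4*(C*B) ≤ 64*Y^6*(A*B)) :
    (576*Y^8+32)*((256*Y^8*B+64*Y^4*B) * (256*Y^8*B+1024*Y^12*B))
      + 1024*Y^8*((256*Y^8*A+1024*Y^10*C) * (256*Y^8*B+64*Y^4*B))
    ≤ 1024*Y^8*((256*Y^8*A+64*Y^2*C) * (256*Y^8*B+1024*Y^12*B)) := by
  have hY0 : (0:ℤ) ≤ Y := by linarith
  have hK : (0:ℤ) ≤ 2^18*Y^14*(16*Y^8-1) := by
    have h8 : (1:ℤ) = 1^8 := by norm_num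
    have h8' : (1:ℤ) ≤ Y^8 := by
      calc (1:ℤ) = 1^8 := by norm_num
      _ ≤ Y^8 := pow_le_pow_left₀ (by norm_num) (by linarith) 8
    apply mul_nonneg (mul_nonneg (by norm_num) (pow_nonneg hY0 14))
    linarith
  have H2 := mul_le_mul_of_nonneg_left H hK
  have hz : (16:ℤ) ≤ Y^4 := by
    calc (16:ℤ) = 2^4 := by norm_num
    _ ≤ Y^4 := pow_le_pow_left₀ (by norm_num) hY 4
  have hz1 : (0:ℤ) ≤ (Y^4 - 16)*Y^4 := mul_nonneg (by linarith) (pow_nonneg hY0 4)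
  have hz2 : (0:ℤ) ≤ (Y^4 - 16)*(Y^4*Y^4) :=
    mul_nonneg (by linarith) (mul_nonneg (pow_nonneg hY0 4) (pow_nonneg hY0 4))
  have h112 : (0:ℤ) ≤ 112*Y^12 - 52*Y^8 - 24*Y^4 - 1 := by nlinarith [hz, hz1, hz2]
  have hB2 : (0:ℤ) ≤ 524288*(B*B)*Y^12*(112*Y^12 - 52*Y^8 - 24*Y^4 - 1) :=
    mul_nonneg (mul_nonneg (mul_nonneg (by norm_num) (mul_self_nonneg B))
      (pow_nonneg hY0 12)) h112
  linarith [H2, hB2]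

theorem invariant (hl : ∀ i, l i = 2 ^ (2 * 2 ^ i + 4)) (hm : ∀ i, m i = 2 ^ (8 * 2 ^ i))
    (hn : ∀ i, n i = 2 ^ (10 * 2 ^ i)) : ∀ i : ℕ,
    (Vw l m n i).length = 2^(2*2^i - 2) * (Uw l m n i).length ∧
    1 ≤ (Uw l m n i).length ∧
    (1 ≤ i →
      (9 * 2^(4*2^i - 2) + 32) * ((Uw l m n i).length * (Vw l m n i).length)
        + 16 * 2^(4*2^i - 2) * ((Vw l m n i).count false * (Uw l m n i).length)
      ≤ 16 * 2^(4*2^i - 2) * ((Uw l m n i).count false * (Vw l m n i).length)) := by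
  intro i
  induction i with
  | zero =>
      refine ⟨?_, ?_, ?_⟩
      · show (Vw l m n 0).length = 2^(2*2^0-2) * (Uw l m n 0).length
        norm_num [Uw, Vw, subComp]
      · norm_num [Uw, subComp]
      · omega
  | succ i ih =>
      obtain ⟨h1, h2, h3⟩ := ih
      have h2i : 1 ≤ 2^i := Nat.one_le_two_pow
      set y : ℕ := 2^(2^i - 1) with hy
      have hy1 : 1 ≤ y := Nat.one_le_two_pow
      have hy2 : (2:ℕ)^(2*2^i - 2) = y^2 := by
        rw [hy, ← pow_mul]; congr 1; omega
      have hm' : m i = 256*y^8 := by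
        rw [hm i, hy, ← pow_mul, show (256:ℕ) = 2^8 by norm_num, ← pow_add]
        congr 1; omega
      have hl' : l i = 64*y^2 := by
        rw [hl i, hy, ← pow_mul, show (64:ℕ) = 2^6 by norm_num, ← pow_add]
        congr 1; omega
      have hn' : n i = 1024*y^10 := by
        rw [hn i, hy, ← pow_mul, show (1024:ℕ) = 2^10 by norm_num, ← pow_add]
        congr 1; omega
      have hnext2 : (2:ℕ)^(2*2^(i+1) - 2) = 4*y^4 := by
        have h4 : (4:ℕ)*y^4 = 2^((2^i-1)*4 + 2) := by
          rw [pow_add, hy, ← pow_mul]; ring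
        rw [h4]; congr 1
        have hp : 2^(i+1) = 2*2^i := by ring
        omega
      have hnextX : (2:ℕ)^(4*2^(i+1) - 2) = 64*y^8 := by
        rw [hy, ← pow_mul, show (64:ℕ) = 2^6 by norm_num, ← pow_add]
        congr 1
        have : 2^(i+1) = 2*2^i := by ring
        omega
      have hXi : (2:ℕ)^(4*2^i - 2) = 4*y^4 := by
        have h4 : (4:ℕ)*y^4 = 2^((2^i-1)*4 + 2) := by
          rw [pow_add, hy, ← pow_mul]; ring
        rw [h4]; congr 1; omega
      set a := (Uw l m n i).count false with ha
      set b := (Uw l m n i).length with hb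
      set c := (Vw l m n i).count false with hc
      have hqv : (Vw l m n i).length = y^2*b := by rw [h1, hy2]
      have eU : (Uw l m n (i+1)).count false = 256*y^8*a + 64*y^2*c := by
        rw [count_Uw_succ, hm', hl']
      have eUl : (Uw l m n (i+1)).length = 256*y^8*b + 64*y^2*(y^2*b) := by
        rw [length_Uw_succ, hm', hl', hqv]
      have eV : (Vw l m n (i+1)).count false = 256*y^8*a + 1024*y^10*c := by
        rw [count_Vw_succ, hm', hn']
      have eVl : (Vw l m n (i+1)).length = 256*y^8*b + 1024*y^10*(y^2*b) := by
        rw [length_Vw_succ, hm', hn', hqv]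
      refine ⟨?_, ?_, ?_⟩
      · rw [eVl, eUl, hnext2]; ring
      · rw [eUl]
        have hb1 : 1 ≤ 256*y^8*b := by
          calc 1 ≤ b := h2
          _ ≤ 256*y^8*b := Nat.le_mul_of_pos_left b (by positivity)
        omega
      · intro _
        rw [eU, eUl, eV, eVl, hnextX]
        rcases Nat.eq_zero_or_pos i with rfl | hi1
        · have ha0 : a = 1 := by norm_num [ha, Uw, subComp]
          have hb0 : b = 1 := by norm_num [hb, Uw, subComp]
          have hc0 : c = 0 := by norm_num [hc, Vw, subComp]
          have hy0 : y = 1 := by norm_num [hy]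
          rw [ha0, hb0, hc0, hy0]
          norm_num
        · have hy2' : 2 ≤ y := by
            rw [hy]
            calc 2 = 2^1 := by norm_num
            _ ≤ 2^(2^i - 1) := Nat.pow_le_pow_right (by norm_num) (by
                have : 2 ≤ 2^i := by
                  calc 2 = 2^1 := by norm_num
                  _ ≤ 2^i := Nat.pow_le_pow_right (by norm_num) hi1
                omega)
          specialize h3 hi1
          rw [hXi, hqv] at h3
          zify at h3 ⊢
          have hYc : (2:ℤ) ≤ (y:ℤ) := by exact_mod_cast hy2'
          have hAc : (0:ℤ) ≤ (a:ℤ) := by positivity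
          have hBc : (1:ℤ) ≤ (b:ℤ) := by exact_mod_cast h2
          have hCc : (0:ℤ) ≤ (c:ℤ) := by positivity
          have H : (36*(y:ℤ)^4+32)*((y:ℤ)^2*((b:ℤ)*(b:ℤ))) + 64*(y:ℤ)^4*((c:ℤ)*(b:ℤ))
              ≤ 64*(y:ℤ)^6*((a:ℤ)*(b:ℤ)) := by linarith [h3]
          linarith [keyStep (y:ℤ) (a:ℤ) (b:ℤ) (c:ℤ) hYc hAc hBc hCc H]

end Aux

open Aux Filter in
theorem stmt8 (l m n : ℕ → ℕ) (hl : ∀ i, l i = 2 ^ (2 * 2 ^ i + 4))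
    (hm : ∀ i, m i = 2 ^ (8 * 2 ^ i)) (hn : ∀ i, n i = 2 ^ (10 * 2 ^ i)) :
    ¬ ∃ f : ℝ, ∀ w : ℕ → List Bool,
        (∀ k, IsFactor (limWord l m n 0) (w k)) →
        Filter.Tendsto (fun k => (w k).length) Filter.atTop Filter.atTop →
        Filter.Tendsto (fun k => ((w k).count false : ℝ) / ((w k).length : ℝ))
          Filter.atTop (nhds f) := by
  rintro ⟨f, hf⟩
  have hl1 : ∀ h, 1 ≤ l h := fun h => by rw [hl h]; exact Nat.one_le_two_pow
  have hm1 : ∀ h, 1 ≤ m h := fun h => by rw [hm h]; exact Nat.one_le_two_pow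
  have hn1 : ∀ h, 1 ≤ n h := fun h => by rw [hn h]; exact Nat.one_le_two_pow
  have hInv := invariant l m n hl hm hn
  set wA : ℕ → List Bool := fun k => wpow (Uw l m n k) (m k) with hwA
  set wB : ℕ → List Bool := fun k => wpow (Vw l m n k) (l k) with hwB
  have hFA : ∀ k, IsFactor (limWord l m n 0) (wA k) := fun k =>
    isFactor_of_mid l m n hl1 hm1 hn1 (k+1) [] (wA k) (wpow (Vw l m n k) (l k))
      (by rw [wordIter_decomp]; simp; rfl)
  have hFB : ∀ k, IsFactor (limWord l m n 0) (wB k) := fun k =>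
    isFactor_of_mid l m n hl1 hm1 hn1 (k+1) (wpow (Uw l m n k) (m k)) (wB k) []
      (by rw [wordIter_decomp]; simp; rfl)
  have hLA : Tendsto (fun k => (wA k).length) atTop atTop := by
    apply tendsto_atTop_mono ?_ tendsto_id
    intro k
    show k ≤ (wpow (Uw l m n k) (m k)).length
    rw [length_wpow]
    have h1 : k ≤ m k := by
      rw [hm k]
      have h2 := Nat.lt_two_pow_self (n := k)
      have h3 : (2:ℕ)^k ≤ 2^(8*2^k) := Nat.pow_le_pow_right (by norm_num) (by omega)
      omega
    have h4 : m k ≤ m k * (Uw l m n k).length :=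
      Nat.le_mul_of_pos_right _ (hInv k).2.1
    omega
  have hLB : Tendsto (fun k => (wB k).length) atTop atTop := by
    apply tendsto_atTop_mono ?_ tendsto_id
    intro k
    show k ≤ (wpow (Vw l m n k) (l k)).length
    rw [length_wpow]
    have h1 : k ≤ l k := by
      rw [hl k]
      have h2 := Nat.lt_two_pow_self (n := k)
      have h3 : (2:ℕ)^k ≤ 2^(2*2^k+4) := Nat.pow_le_pow_right (by norm_num) (by omega)
      omega
    have hVlen : 1 ≤ (Vw l m n k).length := by
      rw [(hInv k).1]
      exact Nat.one_le_iff_ne_zero.2 (by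
        have := (hInv k).2.1
        positivity)
    have h4 : l k ≤ l k * (Vw l m n k).length := Nat.le_mul_of_pos_right _ hVlen
    omega
  have hTA := hf wA hFA hLA
  have hTB := hf wB hFB hLB
  have hfreqA : ∀ k, ((wA k).count false : ℝ)/((wA k).length)
      = ((Uw l m n k).count false : ℝ)/((Uw l m n k).length) := by
    intro k
    show ((wpow (Uw l m n k) (m k)).count false : ℝ)/((wpow (Uw l m n k) (m k)).length) = _
    rw [count_wpow, length_wpow]
    push_cast
    rw [mul_div_mul_left]
    have := hm1 k
    positivity
  have hfreqB : ∀ k, ((wB k).count false : ℝ)/((wB k).length)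
      = ((Vw l m n k).count false : ℝ)/((Vw l m n k).length) := by
    intro k
    show ((wpow (Vw l m n k) (l k)).count false : ℝ)/((wpow (Vw l m n k) (l k)).length) = _
    rw [count_wpow, length_wpow]
    push_cast
    rw [mul_div_mul_left]
    have := hl1 k
    positivity
  simp only [hfreqA] at hTA
  simp only [hfreqB] at hTB
  have hdiff : Tendsto (fun k => ((Uw l m n k).count false : ℝ)/((Uw l m n k).length)
      - ((Vw l m n k).count false : ℝ)/((Vw l m n k).length)) atTop (nhds 0) := by
    have := hTA.sub hTB
    simpa using this
  have hev : ∀ k, 1 ≤ k → (1/2 : ℝ) ≤ ((Uw l m n k).count false : ℝ)/((Uw l m n k).length)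
      - ((Vw l m n k).count false : ℝ)/((Vw l m n k).length) := by
    intro k hk
    obtain ⟨h1, h2, h3⟩ := hInv k
    specialize h3 hk
    set a := (Uw l m n k).count false
    set b := (Uw l m n k).length
    set c := (Vw l m n k).count false
    set qv := (Vw l m n k).length
    set X : ℕ := 2^(4*2^k - 2) with hX
    have hXpos : 0 < X := by positivity
    have hqv1 : 1 ≤ qv := by
      rw [h1]
      have : 0 < 2^(2*2^k-2) * b := by positivity
      omega
    have s1 : 8*X*((b*qv) + 2*(c*b)) ≤ 8*X*(2*(a*qv)) := by
      calc 8*X*((b*qv)+2*(c*b)) = 8*X*(b*qv) + 16*X*(c*b) := by ring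
      _ ≤ (9*X+32)*(b*qv) + 16*X*(c*b) := by
          apply Nat.add_le_add_right
          exact Nat.mul_le_mul_right _ (by omega)
      _ ≤ 16*X*(a*qv) := h3
      _ = 8*X*(2*(a*qv)) := by ring
    have s2 : (b*qv) + 2*(c*b) ≤ 2*(a*qv) :=
      Nat.le_of_mul_le_mul_left s1 (by positivity)
    have hb : (0:ℝ) < b := by exact_mod_cast h2
    have hq : (0:ℝ) < qv := by exact_mod_cast hqv1
    rw [div_sub_div _ _ (ne_of_gt hb) (ne_of_gt hq), le_div_iff₀ (by positivity)]
    have s2' : (b:ℝ)*qv + 2*((c:ℝ)*b) ≤ 2*((a:ℝ)*qv) := by exact_mod_cast s2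
    linarith
  have hcontra : (1/2 : ℝ) ≤ 0 :=
    ge_of_tendsto hdiff (Filter.eventually_atTop.2 ⟨1, hev⟩)
  norm_num at hcontra
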